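/- arXiv:2508.15618 — 5 statements merged into one kernel-verified Lean document; each statement's English description precedes it below -/
import Mathlib

section
/- Let (Ω, F, μ) be a probability space and let X : Ω → ℝ be a bounded measurable random variable that is not almost surely constant (i.e., there is no c ∈ ℝ with X = c μ-almost everywhere). Then the entropic risk measure is strictly increasing in its risk-aversion parameter: for all 0 < θ₁ < θ₂ one has (1/θ₁)·log(∫_Ω exp(θ₁·X) dμ) < (1/θ₂)·log(∫_Ω exp(θ₂·X) dμ). -/
open MeasureTheory

/-- The entropic risk measure is strictly increasing in its risk-aversion parameter
whenever the random variable is not almost surely constant. -/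
theorem entropic_risk_strictMono_in_theta
    {Ω : Type*} [MeasurableSpace Ω] (μ : Measure Ω) [IsProbabilityMeasure μ]
    (X : Ω → ℝ) (hX : Measurable X) (M : ℝ) (hM : ∀ ω, |X ω| ≤ M)
    (hnc : ¬ ∃ c : ℝ, X =ᵐ[μ] fun _ => c)
    (θ₁ θ₂ : ℝ) (hθ₁ : 0 < θ₁) (hθ₁₂ : θ₁ < θ₂) :
    (1 / θ₁) * Real.log (∫ ω, Real.exp (θ₁ * X ω) ∂μ) <
      (1 / θ₂) * Real.log (∫ ω, Real.exp (θ₂ * X ω) ∂μ) := by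
  have hθ₂ : 0 < θ₂ := hθ₁.trans hθ₁₂
  set p : ℝ := θ₁ / θ₂ with hp
  have hp₀ : 0 < p := div_pos hθ₁ hθ₂
  have hp₁ : p < 1 := (div_lt_one hθ₂).2 hθ₁₂
  set Y : Ω → ℝ := fun ω => Real.exp (θ₂ * X ω) with hY
  have hYmeas : Measurable Y := (hX.const_mul θ₂).exp
  have hYpos : ∀ ω, 0 < Y ω := fun ω => Real.exp_pos _
  have hYbound : ∀ ω, Y ω ≤ Real.exp (θ₂ * M) := fun ω => Real.exp_le_exp.2
    (mul_le_mul_of_nonneg_left ((abs_le.1 (hM ω)).2) hθ₂.le)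
  have hYint : Integrable Y μ := by
    refine (integrable_const (Real.exp (θ₂ * M))).mono' hYmeas.aestronglyMeasurable
      (Filter.Eventually.of_forall fun ω => ?_)
    rw [Real.norm_eq_abs, abs_of_pos (hYpos ω)]; exact hYbound ω
  -- rewrite Y^p as exp(θ₁ X)
  have hrw : ∀ ω, Y ω ^ p = Real.exp (θ₁ * X ω) := by
    intro ω
    show Real.exp (θ₂ * X ω) ^ p = Real.exp (θ₁ * X ω)
    rw [← Real.exp_log (Real.exp_pos (θ₂ * X ω)), Real.log_exp, ← Real.exp_mul]
    congr 1
    field_simp [hp]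
    rw [hp]; linear_combination (X ω * θ₁) * mul_inv_cancel₀ hθ₂.ne'
  have hgYmeas : Measurable (fun ω => Y ω ^ p) := by
    have h : (fun ω => Y ω ^ p) = fun ω => Real.exp (θ₁ * X ω) := funext hrw
    rw [h]; exact (hX.const_mul θ₁).exp
  have hgYint : Integrable (fun ω => Y ω ^ p) μ := by
    refine (integrable_const (Real.exp (θ₂ * M) ^ p)).mono'
      hgYmeas.aestronglyMeasurable (Filter.Eventually.of_forall fun ω => ?_)
    rw [Real.norm_eq_abs, abs_of_pos (Real.rpow_pos_of_pos (hYpos ω) p)]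
    exact Real.rpow_le_rpow (hYpos ω).le (hYbound ω) hp₀.le
  -- positivity of integrals
  have hI₂pos : 0 < ∫ ω, Y ω ∂μ := by
    have h1 : Real.exp (-(θ₂ * M)) ≤ ∫ ω, Y ω ∂μ := by
      have h2 := integral_mono (μ := μ) (integrable_const (Real.exp (-(θ₂ * M)))) hYint
        (fun ω => Real.exp_le_exp.2 (by nlinarith [(abs_le.1 (hM ω)).1]))
      simpa using h2
    linarith [Real.exp_pos (-(θ₂ * M))]
  have hI₁pos : 0 < ∫ ω, Real.exp (θ₁ * X ω) ∂μ := by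
    have h1 : Real.exp (-(θ₁ * M)) ≤ ∫ ω, Real.exp (θ₁ * X ω) ∂μ := by
      have hint1 : Integrable (fun ω => Real.exp (θ₁ * X ω)) μ :=
        hgYint.congr (Filter.Eventually.of_forall fun ω => hrw ω)
      have h2 := integral_mono (μ := μ) (integrable_const (Real.exp (-(θ₁ * M)))) hint1
        (fun ω => Real.exp_le_exp.2 (by nlinarith [(abs_le.1 (hM ω)).1]))
      simpa using h2
    linarith [Real.exp_pos (-(θ₁ * M))]
  -- strict Jensen
  have hjensen := (Real.strictConcaveOn_rpow hp₀ hp₁).ae_eq_const_or_lt_map_average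
    (f := Y) (μ := μ)
    (fun x hx => (Real.continuousAt_rpow_const x p (Or.inr hp₀.le)).continuousWithinAt)
    isClosed_Ici (Filter.Eventually.of_forall fun ω => (hYpos ω).le) hYint hgYint
  rcases hjensen with hconst | hlt
  · exfalso
    apply hnc
    refine ⟨Real.log (⨍ ω, Y ω ∂μ) / θ₂, ?_⟩
    filter_upwards [hconst] with ω hω
    have : Real.exp (θ₂ * X ω) = ⨍ ω, Y ω ∂μ := hω
    have h1 : θ₂ * X ω = Real.log (⨍ ω, Y ω ∂μ) := by
      rw [← this, Real.log_exp]
    field_simp [← h1]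
    linarith [h1]
  · rw [average_eq_integral, average_eq_integral] at hlt
    have hlt' : ∫ ω, Real.exp (θ₁ * X ω) ∂μ < (∫ ω, Y ω ∂μ) ^ p := by
      calc ∫ ω, Real.exp (θ₁ * X ω) ∂μ = ∫ ω, Y ω ^ p ∂μ :=
            integral_congr_ae (Filter.Eventually.of_forall fun ω => (hrw ω).symm)
        _ < _ := hlt
    have hlog : Real.log (∫ ω, Real.exp (θ₁ * X ω) ∂μ) < p * Real.log (∫ ω, Y ω ∂μ) := by
      rw [← Real.log_rpow hI₂pos]
      exact Real.log_lt_log hI₁pos hlt'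
    have hkey : (1 / θ₁) * Real.log (∫ ω, Real.exp (θ₁ * X ω) ∂μ) <
        (1 / θ₁) * (p * Real.log (∫ ω, Y ω ∂μ)) :=
      mul_lt_mul_of_pos_left hlog (by positivity)
    calc (1 / θ₁) * Real.log (∫ ω, Real.exp (θ₁ * X ω) ∂μ)
        < (1 / θ₁) * (p * Real.log (∫ ω, Y ω ∂μ)) := hkey
      _ = (1 / θ₂) * Real.log (∫ ω, Real.exp (θ₂ * X ω) ∂μ) := by
          rw [hp]; field_simp; rfl
end

section
/- Let (Ω, F, μ) be a probability space, let θ > 0, and let X, δ : Ω → ℝ be bounded measurable random variables. Then the real function t ↦ (1/θ)·log(∫_Ω exp(θ·(X + t·δ)) dμ) is differentiable at t = 0 with derivative equal to ∫_Ω exp(θ·X)·δ dμ / ∫_Ω exp(θ·X) dμ. -/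
open MeasureTheory

/-- The entropic risk measure is differentiable along bounded measurable directions,
with derivative given by an exponentially tilted expectation. -/
theorem entropic_risk_hasDerivAt
    {Ω : Type*} [MeasurableSpace Ω] (μ : Measure Ω) [IsProbabilityMeasure μ]
    (θ : ℝ) (hθ : 0 < θ)
    (X δ : Ω → ℝ) (hX : Measurable X) (hδ : Measurable δ)
    (MX : ℝ) (hMX : ∀ ω, |X ω| ≤ MX) (Mδ : ℝ) (hMδ : ∀ ω, |δ ω| ≤ Mδ) :
    HasDerivAt
      (fun t : ℝ => (1 / θ) * Real.log (∫ ω, Real.exp (θ * (X ω + t * δ ω)) ∂μ))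
      ((∫ ω, Real.exp (θ * X ω) * δ ω ∂μ) / (∫ ω, Real.exp (θ * X ω) ∂μ)) 0 := by
  classical
  set F : ℝ → Ω → ℝ := fun t ω => Real.exp (θ * (X ω + t * δ ω)) with hF
  set F' : ℝ → Ω → ℝ := fun t ω => (θ * δ ω) * Real.exp (θ * (X ω + t * δ ω)) with hF'
  -- pointwise bound on |argument|
  have hbd : ∀ t ∈ Metric.ball (0 : ℝ) 1, ∀ ω, |θ * (X ω + t * δ ω)| ≤ θ * (MX + Mδ) := by
    intro t ht ω
    rw [Metric.mem_ball, dist_zero_right, Real.norm_eq_abs] at ht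
    rw [abs_mul, abs_of_pos hθ]
    refine mul_le_mul_of_nonneg_left ?_ hθ.le
    calc |X ω + t * δ ω| ≤ |X ω| + |t * δ ω| := abs_add_le _ _
      _ ≤ MX + Mδ := by
          refine add_le_add (hMX ω) ?_
          rw [abs_mul]
          calc |t| * |δ ω| ≤ 1 * |δ ω| := by
                exact mul_le_mul_of_nonneg_right ht.le (abs_nonneg _)
            _ = |δ ω| := one_mul _
            _ ≤ Mδ := hMδ ω
  have key := hasDerivAt_integral_of_dominated_loc_of_deriv_le (μ := μ)
      (F := F) (F' := F') (x₀ := (0 : ℝ)) (bound := fun _ => θ * Mδ * Real.exp (θ * (MX + Mδ)))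
      (Metric.ball_mem_nhds (0 : ℝ) one_pos)
      (Filter.Eventually.of_forall fun t =>
        ((hX.add ((measurable_const.mul hδ))).const_mul θ).exp.aestronglyMeasurable)
      (by
        refine Integrable.mono' (integrable_const (Real.exp (θ * (MX + Mδ))))
          ((hX.add ((measurable_const.mul hδ))).const_mul θ).exp.aestronglyMeasurable
          (Filter.Eventually.of_forall fun ω => ?_)
        rw [Real.norm_eq_abs, abs_of_pos (Real.exp_pos _)]
        exact Real.exp_le_exp.2 ((le_abs_self _).trans (hbd 0 (by simp) ω)))
      (((hδ.const_mul θ).mul ((hX.add ((measurable_const.mul hδ))).const_mul θ).exp).aestronglyMeasurable)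
      (Filter.Eventually.of_forall fun ω t ht => by
        rw [Real.norm_eq_abs, abs_mul, abs_mul, abs_of_pos hθ, abs_of_pos (Real.exp_pos _)]
        refine mul_le_mul (mul_le_mul_of_nonneg_left (hMδ ω) hθ.le)
          (Real.exp_le_exp.2 ((le_abs_self _).trans (hbd t ht ω))) (Real.exp_pos _).le
          (mul_nonneg hθ.le ((abs_nonneg _).trans (hMδ ω))))
      (integrable_const _)
      (Filter.Eventually.of_forall fun ω t _ => by
        have h1 : HasDerivAt (fun t : ℝ => θ * (X ω + t * δ ω)) (θ * δ ω) t := by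
          simpa using (((hasDerivAt_id t).mul_const (δ ω)).const_add (X ω)).const_mul θ
        simpa [mul_comm] using h1.exp)
  obtain ⟨-, hderiv⟩ := key
  -- positivity of the denominator
  have hint0 : Integrable (F 0) μ := by
    refine Integrable.mono' (integrable_const (Real.exp (θ * (MX + Mδ))))
      ((hX.add ((measurable_const.mul hδ))).const_mul θ).exp.aestronglyMeasurable
      (Filter.Eventually.of_forall fun ω => ?_)
    rw [Real.norm_eq_abs, abs_of_pos (Real.exp_pos _)]
    exact Real.exp_le_exp.2 ((le_abs_self _).trans (hbd 0 (by simp) ω))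
  have hpos : 0 < ∫ ω, F 0 ω ∂μ := by
    have : (Real.exp (-(θ * MX))) = ∫ _ : Ω, Real.exp (-(θ * MX)) ∂μ := by simp
    calc (0 : ℝ) < Real.exp (-(θ * MX)) := Real.exp_pos _
      _ = ∫ _ : Ω, Real.exp (-(θ * MX)) ∂μ := this
      _ ≤ ∫ ω, F 0 ω ∂μ := by
          refine integral_mono (integrable_const _) hint0 fun ω => ?_
          refine Real.exp_le_exp.2 ?_
          have := (abs_le.1 (hMX ω)).1
          simp only [F, zero_mul, add_zero]
          nlinarith
  have hne : (∫ ω, F 0 ω ∂μ) ≠ 0 := ne_of_gt hpos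
  have hlog := (hderiv.log hne).const_mul (1 / θ)
  have heq : ∀ t, (∫ ω, F t ω ∂μ) = ∫ ω, Real.exp (θ * (X ω + t * δ ω)) ∂μ := fun t => rfl
  refine hlog.congr_deriv ?_
  symm
  simp only [F, F', zero_mul, add_zero]
  rw [show (fun ω => θ * δ ω * Real.exp (θ * X ω)) = fun ω => θ * (Real.exp (θ * X ω) * δ ω) by
    funext ω; ring, integral_const_mul]
  field_simp
end

section
/- Let H be a real separable Hilbert space, let C : H → H be a continuous linear map, let (Ω, F, μ) be a probability space, let θ > 0, let g ∈ H, and let y, δ : Ω → H be bounded strongly measurable functions. Then the real function φ(t) := (1/θ)·log(∫_Ω exp(θ·‖C(y(σ) + t·δ(σ) − g)‖_H²) dμ(σ)) is differentiable at t = 0 with derivative φ'(0) = 2·∫_Ω exp(θ·‖C(y(σ) − g)‖_H²)·⟨C*C(y(σ) − g), δ(σ)⟩_H dμ(σ) / ∫_Ω exp(θ·‖C(y(σ) − g)‖_H²) dμ(σ), where C* denotes the Hilbert-space adjoint of C. -/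
open MeasureTheory
open scoped RealInnerProductSpace

/-- First derivative of the entropic risk of a quadratic tracking cost,
in a bounded strongly measurable direction `δ`. -/
theorem entropic_risk_tracking_hasDerivAt
    {H : Type*} [NormedAddCommGroup H] [InnerProductSpace ℝ H]
    [CompleteSpace H] [SecondCountableTopology H]
    (C : H →L[ℝ] H)
    {Ω : Type*} [MeasurableSpace Ω] (μ : Measure Ω) [IsProbabilityMeasure μ]
    (θ : ℝ) (hθ : 0 < θ) (g : H) (y δ : Ω → H)
    (hy : StronglyMeasurable y) (hδ : StronglyMeasurable δ)
    (My : ℝ) (hMy : ∀ σ, ‖y σ‖ ≤ My) (Mδ : ℝ) (hMδ : ∀ σ, ‖δ σ‖ ≤ Mδ) :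
    HasDerivAt
      (fun t : ℝ =>
        (1 / θ) * Real.log (∫ σ, Real.exp (θ * ‖C (y σ + t • δ σ - g)‖ ^ 2) ∂μ))
      (2 * (∫ σ, Real.exp (θ * ‖C (y σ - g)‖ ^ 2) *
              ⟪(ContinuousLinearMap.adjoint C) (C (y σ - g)), δ σ⟫ ∂μ) /
        (∫ σ, Real.exp (θ * ‖C (y σ - g)‖ ^ 2) ∂μ)) 0 := by
  have hθ' : θ ≠ 0 := ne_of_gt hθ
  obtain ⟨σ₀⟩ : Nonempty Ω := by
    by_contra h
    rw [not_nonempty_iff] at h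
    have h1 : μ Set.univ = 1 := measure_univ
    rw [Set.univ_eq_empty_iff.mpr h, measure_empty] at h1
    exact zero_ne_one h1
  have hMy0 : 0 ≤ My := le_trans (norm_nonneg _) (hMy σ₀)
  have hMδ0 : 0 ≤ Mδ := le_trans (norm_nonneg _) (hMδ σ₀)
  set F : ℝ → Ω → ℝ := fun t σ => Real.exp (θ * ‖C (y σ + t • δ σ - g)‖ ^ 2) with hFdef
  set F' : ℝ → Ω → ℝ := fun t σ =>
    Real.exp (θ * ‖C (y σ + t • δ σ - g)‖ ^ 2) *
      (θ * (2 * ⟪C (y σ + t • δ σ - g), C (δ σ)⟫)) with hF'def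
  set R : ℝ := ‖C‖ * (My + Mδ + ‖g‖) with hRdef
  have hR0 : 0 ≤ R := by positivity
  -- norm bound
  have hnorm : ∀ σ, ∀ t : ℝ, t ∈ Metric.ball (0:ℝ) 1 → ‖C (y σ + t • δ σ - g)‖ ≤ R := by
    intro σ t ht
    simp only [Metric.mem_ball, dist_zero_right, Real.norm_eq_abs] at ht
    calc ‖C (y σ + t • δ σ - g)‖ ≤ ‖C‖ * ‖y σ + t • δ σ - g‖ := C.le_opNorm _
    _ ≤ ‖C‖ * (My + Mδ + ‖g‖) := by
        apply mul_le_mul_of_nonneg_left _ (norm_nonneg C)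
        calc ‖y σ + t • δ σ - g‖ ≤ ‖y σ + t • δ σ‖ + ‖g‖ := norm_sub_le _ _
        _ ≤ ‖y σ‖ + ‖t • δ σ‖ + ‖g‖ := by
            gcongr; exact norm_add_le _ _
        _ ≤ My + Mδ + ‖g‖ := by
            gcongr
            · exact hMy σ
            · rw [norm_smul, Real.norm_eq_abs]
              calc |t| * ‖δ σ‖ ≤ 1 * Mδ := by
                    apply mul_le_mul ht.le (hMδ σ) (norm_nonneg _) zero_le_one
              _ = Mδ := one_mul _
  -- measurability
  have hmw : ∀ t : ℝ, StronglyMeasurable (fun σ => C (y σ + t • δ σ - g)) := fun t =>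
    C.continuous.comp_stronglyMeasurable (((hy.add (hδ.const_smul t)).sub
      stronglyMeasurable_const))
  have hmF : ∀ t : ℝ, StronglyMeasurable (F t) := fun t =>
    (Real.continuous_exp.comp_stronglyMeasurable
      (((hmw t).norm.pow 2).const_mul θ))
  have hmF' : StronglyMeasurable (F' 0) := by
    apply StronglyMeasurable.mul (hmF 0)
    apply StronglyMeasurable.const_mul
    apply StronglyMeasurable.const_mul
    exact (hmw 0).inner (C.continuous.comp_stronglyMeasurable hδ)
  -- integrability of F 0
  have hFle : ∀ σ, F 0 σ ≤ Real.exp (θ * R ^ 2) := by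
    intro σ
    apply Real.exp_le_exp.mpr
    apply mul_le_mul_of_nonneg_left _ hθ.le
    exact pow_le_pow_left₀ (norm_nonneg _) (hnorm σ 0 (by simp)) 2
  have hFint : Integrable (F 0) μ := by
    apply Integrable.mono' (integrable_const (Real.exp (θ * R ^ 2))) (hmF 0).aestronglyMeasurable
    filter_upwards with σ
    rw [Real.norm_eq_abs, abs_of_pos (Real.exp_pos _)]
    exact hFle σ
  -- derivative pointwise
  have hderiv : ∀ σ, ∀ t : ℝ, HasDerivAt (fun s => F s σ) (F' t σ) t := by
    intro σ t
    have h1 : HasDerivAt (fun s : ℝ => C (y σ + s • δ σ - g)) (C (δ σ)) t := by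
      have heq : (fun s : ℝ => C (y σ + s • δ σ - g))
          = fun s : ℝ => C (y σ - g) + s • C (δ σ) := by
        funext s
        rw [← map_smul C s, ← map_add]
        congr 1
        abel
      rw [heq]
      simpa using ((hasDerivAt_id t).smul_const (C (δ σ))).const_add (C (y σ - g))
    have h2 : HasDerivAt
        (fun s : ℝ => ⟪C (y σ + s • δ σ - g), C (y σ + s • δ σ - g)⟫)
        (2 * ⟪C (y σ + t • δ σ - g), C (δ σ)⟫) t := by
      have := h1.inner ℝ h1
      simpa [real_inner_comm, two_mul] using this
    have h3 : HasDerivAt (fun s : ℝ => θ * ‖C (y σ + s • δ σ - g)‖ ^ 2)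
        (θ * (2 * ⟪C (y σ + t • δ σ - g), C (δ σ)⟫)) t := by
      have := h2.const_mul θ
      simpa [real_inner_self_eq_norm_sq] using this
    simpa [hFdef, hF'def] using h3.exp
  -- bound on F'
  have hbound : ∀ σ, ∀ t : ℝ, t ∈ Metric.ball (0:ℝ) 1 →
      ‖F' t σ‖ ≤ Real.exp (θ * R ^ 2) * (θ * (2 * (R * (‖C‖ * Mδ)))) := by
    intro σ t ht
    rw [hF'def]
    simp only [Real.norm_eq_abs, abs_mul, abs_of_pos (Real.exp_pos _),
      abs_of_pos hθ, abs_of_pos (show (0:ℝ) < 2 by norm_num)]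
    apply mul_le_mul _ _ (by positivity) (Real.exp_pos _).le
    · apply Real.exp_le_exp.mpr
      apply mul_le_mul_of_nonneg_left _ hθ.le
      exact pow_le_pow_left₀ (norm_nonneg _) (hnorm σ t ht) 2
    · apply mul_le_mul_of_nonneg_left _ hθ.le
      apply mul_le_mul_of_nonneg_left _ (by norm_num : (0:ℝ) ≤ 2)
      calc |⟪C (y σ + t • δ σ - g), C (δ σ)⟫| ≤ ‖C (y σ + t • δ σ - g)‖ * ‖C (δ σ)‖ :=
            abs_real_inner_le_norm _ _
      _ ≤ R * (‖C‖ * Mδ) := by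
          apply mul_le_mul (hnorm σ t ht) _ (norm_nonneg _) hR0
          calc ‖C (δ σ)‖ ≤ ‖C‖ * ‖δ σ‖ := C.le_opNorm _
          _ ≤ ‖C‖ * Mδ := mul_le_mul_of_nonneg_left (hMδ σ) (norm_nonneg C)
  -- apply dominated derivative theorem
  obtain ⟨hF'int, hI⟩ := hasDerivAt_integral_of_dominated_loc_of_deriv_le
    (F := F) (F' := F') (x₀ := (0:ℝ))
    (bound := fun _ => Real.exp (θ * R ^ 2) * (θ * (2 * (R * (‖C‖ * Mδ)))))
    (Metric.ball_mem_nhds (0:ℝ) zero_lt_one)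
    (Filter.Eventually.of_forall fun t => (hmF t).aestronglyMeasurable)
    hFint
    hmF'.aestronglyMeasurable
    (Filter.Eventually.of_forall fun σ t ht => hbound σ t ht)
    (integrable_const _)
    (Filter.Eventually.of_forall fun σ t _ => hderiv σ t)
  -- positivity of the denominator
  have hI0pos : 0 < ∫ σ, F 0 σ ∂μ := by
    have h1 : (1:ℝ) ≤ ∫ σ, F 0 σ ∂μ := by
      have := integral_mono (μ := μ) (integrable_const (1:ℝ)) hFint
        (fun σ => by
          simp only [hFdef]
          exact Real.one_le_exp (by positivity))
      simpa using this
    linarith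
  -- take the log and scale
  have hlog := (hI.log (ne_of_gt hI0pos)).const_mul (1 / θ)
  -- simplify F at 0
  have hF0 : F 0 = fun σ => Real.exp (θ * ‖C (y σ - g)‖ ^ 2) := by
    funext σ; simp [hFdef]
  have hF'0 : F' 0 = fun σ => (θ * 2) *
      (Real.exp (θ * ‖C (y σ - g)‖ ^ 2) *
        ⟪(ContinuousLinearMap.adjoint C) (C (y σ - g)), δ σ⟫) := by
    funext σ
    simp only [hF'def, zero_smul, add_zero, ContinuousLinearMap.adjoint_inner_left]
    ring
  have hval : (1 / θ) * ((∫ σ, F' 0 σ ∂μ) / (∫ σ, F 0 σ ∂μ))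
      = 2 * (∫ σ, Real.exp (θ * ‖C (y σ - g)‖ ^ 2) *
              ⟪(ContinuousLinearMap.adjoint C) (C (y σ - g)), δ σ⟫ ∂μ) /
        (∫ σ, Real.exp (θ * ‖C (y σ - g)‖ ^ 2) ∂μ) := by
    rw [hF'0, hF0, integral_const_mul, mul_div_assoc, ← mul_assoc]
    have h2 : 1 / θ * (θ * 2) = 2 := by field_simp
    rw [h2, ← mul_div_assoc]
  rw [hval] at hlog
  exact hlog
end

section
/- Let H be a real separable Hilbert space, let C : H → H be a continuous linear map, let (Ω, F, μ) be a probability space, let θ > 0, let g ∈ H, and let y, δ : Ω → H be bounded strongly measurable functions. Define the tilted weight ω(σ) := exp(θ·‖C(y(σ) − g)‖_H²) / ∫_Ω exp(θ·‖C(y(τ) − g)‖_H²) dμ(τ) and set 𝒞(σ) := C*C(y(σ) − g). Then the real function φ(t) := (1/θ)·log(∫_Ω exp(θ·‖C(y(σ) + t·δ(σ) − g)‖_H²) dμ(σ)) is twice differentiable at t = 0 and its second derivative equals φ''(0) = 2·∫_Ω ω(σ)·⟨C*C δ(σ), δ(σ)⟩_H dμ(σ) + 4θ·( ∫_Ω ω(σ)·⟨𝒞(σ),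 δ(σ)⟩_H² dμ(σ) − ( ∫_Ω ω(σ)·⟨𝒞(σ), δ(σ)⟩_H dμ(σ) )² ). -/
open MeasureTheory
open scoped RealInnerProductSpace

namespace EntropicAux
variable {Ω : Type*} [MeasurableSpace Ω]

/-- The exponential integrand with quadratic exponent. -/
noncomputable def ef (θ : ℝ) (q0 q1 q2 : Ω → ℝ) (t : ℝ) (σ : Ω) : ℝ :=
  Real.exp (θ * (q0 σ + q1 σ * t + q2 σ * t ^ 2))

lemma ef_pos (θ : ℝ) (q0 q1 q2 : Ω → ℝ) (t : ℝ) (σ : Ω) : 0 < ef θ q0 q1 q2 t σ :=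
  Real.exp_pos _

lemma hasDerivAt_ef (θ : ℝ) (q0 q1 q2 : Ω → ℝ) (σ : Ω) (t : ℝ) :
    HasDerivAt (fun s => ef θ q0 q1 q2 s σ)
      (θ * (q1 σ + 2 * q2 σ * t) * ef θ q0 q1 q2 t σ) t := by
  have h : HasDerivAt (fun s : ℝ => θ * (q0 σ + q1 σ * s + q2 σ * s ^ 2))
      (θ * (q1 σ + 2 * q2 σ * t)) t := by
    have h1 : HasDerivAt (fun s : ℝ => q0 σ + q1 σ * s + q2 σ * s ^ 2)
        (0 + q1 σ * 1 + q2 σ * ((2:ℕ) * t ^ (2-1))) t :=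
      (((hasDerivAt_const t (q0 σ)).add ((hasDerivAt_id t).const_mul (q1 σ))).add
        ((hasDerivAt_pow 2 t).const_mul (q2 σ)))
    have := h1.const_mul θ
    refine this.congr_deriv ?_
    push_cast
    ring
  have := h.exp
  convert this using 1
  all_goals simp only [ef]
  ring

lemma ef_meas (θ : ℝ) {q0 q1 q2 : Ω → ℝ} (h0 : StronglyMeasurable q0)
    (h1 : StronglyMeasurable q1) (h2 : StronglyMeasurable q2) (t : ℝ) :
    StronglyMeasurable (ef θ q0 q1 q2 t) :=
  Real.continuous_exp.comp_stronglyMeasurable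
    (((h0.add (h1.mul_const t)).add (h2.mul_const (t ^ 2))).const_mul θ)

lemma integrable_of_bdd (μ : Measure Ω) [IsFiniteMeasure μ] {h : Ω → ℝ}
    (hm : AEStronglyMeasurable h μ) {M : ℝ} (hb : ∀ σ, |h σ| ≤ M) : Integrable h μ :=
  ⟨hm, HasFiniteIntegral.of_bounded (ae_of_all _ fun σ => by simpa using hb σ)⟩

lemma poly_abs_bound {Q x q0v q1v q2v : ℝ} (h00 : 0 ≤ q0v) (h0 : q0v ≤ Q)
    (h1 : |q1v| ≤ 2 * Q) (h20 : 0 ≤ q2v) (h2 : q2v ≤ Q) (hx : |x| ≤ 1) :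
    |q0v + q1v * x + q2v * x ^ 2| ≤ 4 * Q := by
  have hQ : 0 ≤ Q := le_trans h00 h0
  have h1x : |q1v * x| ≤ 2 * Q := by
    rw [abs_mul]
    calc |q1v| * |x| ≤ (2 * Q) * 1 :=
          mul_le_mul h1 hx (abs_nonneg _) (by linarith)
      _ = 2 * Q := mul_one _
  have h1x' := abs_le.mp h1x
  have hx2 : x ^ 2 ≤ 1 := by nlinarith [abs_le.mp hx, sq_nonneg x]
  have h2x : q2v * x ^ 2 ≤ Q := le_trans (by nlinarith) h2
  have h2x0 : 0 ≤ q2v * x ^ 2 := mul_nonneg h20 (sq_nonneg x)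
  rw [abs_le]
  constructor <;> linarith [h1x'.1, h1x'.2]

lemma lin_abs_bound {Q x q1v q2v : ℝ} (h1 : |q1v| ≤ 2 * Q) (h20 : 0 ≤ q2v) (h2 : q2v ≤ Q)
    (hx : |x| ≤ 1) : |q1v + 2 * q2v * x| ≤ 4 * Q := by
  have hQ : 0 ≤ Q := le_trans h20 h2
  rw [abs_le] at *
  constructor <;> nlinarith

lemma ef_le {θ Q : ℝ} (hθ : 0 < θ) {q0 q1 q2 : Ω → ℝ}
    (h0 : ∀ σ, 0 ≤ q0 σ ∧ q0 σ ≤ Q) (h1 : ∀ σ, |q1 σ| ≤ 2 * Q)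
    (h2 : ∀ σ, 0 ≤ q2 σ ∧ q2 σ ≤ Q) {t : ℝ} (ht : |t| ≤ 1) (σ : Ω) :
    ef θ q0 q1 q2 t σ ≤ Real.exp (θ * (4 * Q)) := by
  apply Real.exp_le_exp.mpr
  apply mul_le_mul_of_nonneg_left _ hθ.le
  exact le_trans (le_abs_self _)
    (poly_abs_bound (h0 σ).1 (h0 σ).2 (h1 σ) (h2 σ).1 (h2 σ).2 ht)

lemma le_ef {θ Q : ℝ} (hθ : 0 < θ) {q0 q1 q2 : Ω → ℝ}
    (h0 : ∀ σ, 0 ≤ q0 σ ∧ q0 σ ≤ Q) (h1 : ∀ σ, |q1 σ| ≤ 2 * Q)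
    (h2 : ∀ σ, 0 ≤ q2 σ ∧ q2 σ ≤ Q) {t : ℝ} (ht : |t| ≤ 1) (σ : Ω) :
    Real.exp (-(θ * (2 * Q))) ≤ ef θ q0 q1 q2 t σ := by
  apply Real.exp_le_exp.mpr
  rw [neg_le, ← mul_neg]
  apply mul_le_mul_of_nonneg_left _ hθ.le
  have h1x : |q1 σ * t| ≤ 2 * Q := by
    rw [abs_mul]
    calc |q1 σ| * |t| ≤ (2 * Q) * 1 :=
          mul_le_mul (h1 σ) ht (abs_nonneg _) (le_trans (abs_nonneg _) (h1 σ))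
      _ = 2 * Q := mul_one _
  have := (abs_le.mp h1x).1
  nlinarith [(h0 σ).1, (h2 σ).1, sq_nonneg t]

open Filter

lemma main (μ : Measure Ω) [IsProbabilityMeasure μ] {θ Q : ℝ} (hθ : 0 < θ)
    {q0 q1 q2 : Ω → ℝ} (m0 : StronglyMeasurable q0) (m1 : StronglyMeasurable q1)
    (m2 : StronglyMeasurable q2)
    (h0 : ∀ σ, 0 ≤ q0 σ ∧ q0 σ ≤ Q) (h1 : ∀ σ, |q1 σ| ≤ 2 * Q)
    (h2 : ∀ σ, 0 ≤ q2 σ ∧ q2 σ ≤ Q) :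
    DifferentiableAt ℝ (fun t => (1 / θ) * Real.log (∫ σ, ef θ q0 q1 q2 t σ ∂μ)) 0 ∧
    HasDerivAt (deriv (fun t => (1 / θ) * Real.log (∫ σ, ef θ q0 q1 q2 t σ ∂μ)))
      (2 * (∫ σ, (ef θ q0 q1 q2 0 σ / ∫ τ, ef θ q0 q1 q2 0 τ ∂μ) * q2 σ ∂μ)
        + 4 * θ * ((∫ σ, (ef θ q0 q1 q2 0 σ / ∫ τ, ef θ q0 q1 q2 0 τ ∂μ) * (q1 σ / 2) ^ 2 ∂μ)
          - (∫ σ, (ef θ q0 q1 q2 0 σ / ∫ τ, ef θ q0 q1 q2 0 τ ∂μ) * (q1 σ / 2) ∂μ) ^ 2)) 0 := by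
  have hne : Nonempty Ω := by
    by_contra h
    rw [not_nonempty_iff] at h
    have h1 : (μ Set.univ) = 1 := measure_univ
    rw [Set.univ_eq_empty_iff.mpr h] at h1
    simp at h1
  obtain ⟨σ₀⟩ := hne
  have hQ : 0 ≤ Q := le_trans (h0 σ₀).1 (h0 σ₀).2
  set E : ℝ := Real.exp (θ * (4 * Q)) with hE_def
  have hE0 : 0 < E := Real.exp_pos _
  -- integrability of the integrand
  have hint : ∀ t : ℝ, |t| ≤ 1 → Integrable (ef θ q0 q1 q2 t) μ := by
    intro t ht
    refine integrable_of_bdd μ (ef_meas θ m0 m1 m2 t).aestronglyMeasurable (M := E) fun σ => ?_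
    rw [abs_of_pos (ef_pos θ q0 q1 q2 t σ)]
    exact ef_le hθ h0 h1 h2 ht σ
  have meas1 : ∀ t : ℝ, StronglyMeasurable
      (fun σ => θ * (q1 σ + 2 * q2 σ * t) * ef θ q0 q1 q2 t σ) := fun t =>
    (((m1.add ((m2.const_mul 2).mul_const t)).const_mul θ)).mul (ef_meas θ m0 m1 m2 t)
  have habsA : ∀ (x : ℝ), |x| ≤ 1 → ∀ σ, |θ * (q1 σ + 2 * q2 σ * x)| ≤ θ * (4 * Q) := by
    intro x hx σ
    rw [abs_mul, abs_of_pos hθ]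
    exact mul_le_mul_of_nonneg_left (lin_abs_bound (h1 σ) (h2 σ).1 (h2 σ).2 hx) hθ.le
  have hbd1 : ∀ (x : ℝ), |x| ≤ 1 → ∀ σ,
      |θ * (q1 σ + 2 * q2 σ * x) * ef θ q0 q1 q2 x σ| ≤ θ * (4 * Q) * E := by
    intro x hx σ
    rw [abs_mul, abs_of_pos (ef_pos θ q0 q1 q2 x σ)]
    exact mul_le_mul (habsA x hx σ) (ef_le hθ h0 h1 h2 hx σ)
      (ef_pos θ q0 q1 q2 x σ).le (by positivity)
  -- first derivative of K
  have key : ∀ t₀ : ℝ, |t₀| < 1 →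
      HasDerivAt (fun t => ∫ σ, ef θ q0 q1 q2 t σ ∂μ)
        (∫ σ, θ * (q1 σ + 2 * q2 σ * t₀) * ef θ q0 q1 q2 t₀ σ ∂μ) t₀ := by
    intro t₀ ht₀
    have hε : (0:ℝ) < 1 - |t₀| := by linarith
    have hsub : ∀ x ∈ Metric.ball t₀ (1 - |t₀|), |x| ≤ 1 := by
      intro x hx
      rw [Metric.mem_ball, Real.dist_eq] at hx
      calc |x| = |(x - t₀) + t₀| := by ring_nf
        _ ≤ |x - t₀| + |t₀| := abs_add_le _ _
        _ ≤ 1 := by linarith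
    exact (hasDerivAt_integral_of_dominated_loc_of_deriv_le (Metric.ball_mem_nhds t₀ hε)
      (F := fun t σ => ef θ q0 q1 q2 t σ)
      (F' := fun t σ => θ * (q1 σ + 2 * q2 σ * t) * ef θ q0 q1 q2 t σ)
      (bound := fun _ => θ * (4 * Q) * E)
      (Eventually.of_forall fun t => (ef_meas θ m0 m1 m2 t).aestronglyMeasurable)
      (hint t₀ ht₀.le)
      (meas1 t₀).aestronglyMeasurable
      (ae_of_all _ fun σ x hx => by
        rw [Real.norm_eq_abs]; exact hbd1 x (hsub x hx) σ)
      (integrable_const _)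
      (ae_of_all _ fun σ x _ => hasDerivAt_ef θ q0 q1 q2 σ x)).2
  -- second derivative: derivative of K1 at 0
  have key2 : HasDerivAt (fun t => ∫ σ, θ * (q1 σ + 2 * q2 σ * t) * ef θ q0 q1 q2 t σ ∂μ)
      (∫ σ, (θ * (2 * q2 σ) * ef θ q0 q1 q2 0 σ
        + (θ * (q1 σ + 2 * q2 σ * 0)) ^ 2 * ef θ q0 q1 q2 0 σ) ∂μ) 0 := by
    have hsub : ∀ x ∈ Metric.ball (0:ℝ) 1, |x| ≤ 1 := by
      intro x hx
      rw [Metric.mem_ball, Real.dist_eq, sub_zero] at hx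
      exact hx.le
    refine (hasDerivAt_integral_of_dominated_loc_of_deriv_le (Metric.ball_mem_nhds (0:ℝ) one_pos)
      (F := fun t σ => θ * (q1 σ + 2 * q2 σ * t) * ef θ q0 q1 q2 t σ)
      (F' := fun t σ => θ * (2 * q2 σ) * ef θ q0 q1 q2 t σ
        + (θ * (q1 σ + 2 * q2 σ * t)) ^ 2 * ef θ q0 q1 q2 t σ)
      (bound := fun _ => (θ * (2 * Q) + (θ * (4 * Q)) ^ 2) * E)
      (Eventually.of_forall fun t => (meas1 t).aestronglyMeasurable)
      ?_ ?_ ?_ (integrable_const _) ?_).2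
    · refine integrable_of_bdd μ (meas1 0).aestronglyMeasurable
        (M := θ * (4 * Q) * E) fun σ => hbd1 0 (by norm_num) σ
    · exact ((((m2.const_mul 2).const_mul θ).mul (ef_meas θ m0 m1 m2 0)).add
        ((((m1.add ((m2.const_mul 2).mul_const 0)).const_mul θ).pow 2).mul
          (ef_meas θ m0 m1 m2 0))).aestronglyMeasurable
    · refine ae_of_all _ fun σ x hx => ?_
      have hx1 := hsub x hx
      have hef := ef_le hθ h0 h1 h2 hx1 σ
      have hef0 := (ef_pos θ q0 q1 q2 x σ).le
      have hA := habsA x hx1 σ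
      have hA2 : (θ * (q1 σ + 2 * q2 σ * x)) ^ 2 ≤ (θ * (4 * Q)) ^ 2 := by
        have := abs_le.mp hA
        nlinarith
      have ht1 : θ * (2 * q2 σ) * ef θ q0 q1 q2 x σ ≤ θ * (2 * Q) * E := by
        refine mul_le_mul (by nlinarith [(h2 σ).2]) hef hef0 (by positivity)
      have ht2 : (θ * (q1 σ + 2 * q2 σ * x)) ^ 2 * ef θ q0 q1 q2 x σ
          ≤ (θ * (4 * Q)) ^ 2 * E := mul_le_mul hA2 hef hef0 (by positivity)
      have hnn : 0 ≤ θ * (2 * q2 σ) * ef θ q0 q1 q2 x σ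
          + (θ * (q1 σ + 2 * q2 σ * x)) ^ 2 * ef θ q0 q1 q2 x σ :=
        add_nonneg (mul_nonneg (mul_nonneg hθ.le (by linarith [(h2 σ).1])) hef0)
          (mul_nonneg (sq_nonneg _) hef0)
      rw [Real.norm_eq_abs, abs_of_nonneg hnn]
      show _ ≤ (θ * (2 * Q) + (θ * (4 * Q)) ^ 2) * E
      nlinarith [ht1, ht2]
    · refine ae_of_all _ fun σ x _ => ?_
      have hc : HasDerivAt (fun s : ℝ => θ * (q1 σ + 2 * q2 σ * s)) (θ * (2 * q2 σ)) x := by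
        have := ((hasDerivAt_const x (q1 σ)).add
          ((hasDerivAt_id x).const_mul (2 * q2 σ))).const_mul θ
        refine this.congr_deriv ?_
        ring
      have := hc.mul (hasDerivAt_ef θ q0 q1 q2 σ x)
      refine this.congr_deriv ?_
      ring
  -- positivity of K
  have hKpos : ∀ t : ℝ, |t| ≤ 1 → 0 < ∫ σ, ef θ q0 q1 q2 t σ ∂μ := by
    intro t ht
    have hle : ∀ σ, Real.exp (-(θ * (2 * Q))) ≤ ef θ q0 q1 q2 t σ := le_ef hθ h0 h1 h2 ht
    have h2' : Real.exp (-(θ * (2 * Q))) ≤ ∫ σ, ef θ q0 q1 q2 t σ ∂μ := by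
      calc Real.exp (-(θ * (2 * Q))) = ∫ _, Real.exp (-(θ * (2 * Q))) ∂μ := by simp
        _ ≤ _ := integral_mono (integrable_const _) (hint t ht) hle
    exact lt_of_lt_of_le (Real.exp_pos _) h2'
  -- first derivative of φ on the ball
  have hφ : ∀ t : ℝ, |t| < 1 →
      HasDerivAt (fun t => (1 / θ) * Real.log (∫ σ, ef θ q0 q1 q2 t σ ∂μ))
        ((1 / θ) * ((∫ σ, θ * (q1 σ + 2 * q2 σ * t) * ef θ q0 q1 q2 t σ ∂μ)
          / ∫ σ, ef θ q0 q1 q2 t σ ∂μ)) t := fun t ht =>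
    ((key t ht).log (hKpos t ht.le).ne').const_mul (1 / θ)
  refine ⟨(hφ 0 (by norm_num)).differentiableAt, ?_⟩
  -- second derivative
  have hdiv : HasDerivAt (fun t => (1 / θ) * ((∫ σ, θ * (q1 σ + 2 * q2 σ * t) * ef θ q0 q1 q2 t σ ∂μ)
        / ∫ σ, ef θ q0 q1 q2 t σ ∂μ))
      ((1 / θ) * (((∫ σ, (θ * (2 * q2 σ) * ef θ q0 q1 q2 0 σ
          + (θ * (q1 σ + 2 * q2 σ * 0)) ^ 2 * ef θ q0 q1 q2 0 σ) ∂μ)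
            * (∫ σ, ef θ q0 q1 q2 0 σ ∂μ)
        - (∫ σ, θ * (q1 σ + 2 * q2 σ * 0) * ef θ q0 q1 q2 0 σ ∂μ)
            * (∫ σ, θ * (q1 σ + 2 * q2 σ * 0) * ef θ q0 q1 q2 0 σ ∂μ))
        / (∫ σ, ef θ q0 q1 q2 0 σ ∂μ) ^ 2)) 0 :=
    (key2.div (key 0 (by norm_num)) (hKpos 0 (by norm_num)).ne').const_mul (1 / θ)
  have hmain : HasDerivAt (deriv (fun t => (1 / θ) * Real.log (∫ σ, ef θ q0 q1 q2 t σ ∂μ)))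
      ((1 / θ) * (((∫ σ, (θ * (2 * q2 σ) * ef θ q0 q1 q2 0 σ
          + (θ * (q1 σ + 2 * q2 σ * 0)) ^ 2 * ef θ q0 q1 q2 0 σ) ∂μ)
            * (∫ σ, ef θ q0 q1 q2 0 σ ∂μ)
        - (∫ σ, θ * (q1 σ + 2 * q2 σ * 0) * ef θ q0 q1 q2 0 σ ∂μ)
            * (∫ σ, θ * (q1 σ + 2 * q2 σ * 0) * ef θ q0 q1 q2 0 σ ∂μ))
        / (∫ σ, ef θ q0 q1 q2 0 σ ∂μ) ^ 2)) 0 := by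
    refine hdiv.congr_of_eventuallyEq ?_
    have hball : Metric.ball (0:ℝ) 1 ∈ nhds (0:ℝ) := Metric.ball_mem_nhds _ one_pos
    refine Filter.eventuallyEq_of_mem hball fun t ht => ?_
    rw [Metric.mem_ball, Real.dist_eq, sub_zero] at ht
    exact (hφ t ht).deriv
  -- now identify the value
  convert hmain using 1
  simp only [mul_zero, add_zero]
  have hc : 0 < ∫ σ, ef θ q0 q1 q2 0 σ ∂μ := hKpos 0 (by norm_num)
  have efm := ef_meas θ m0 m1 m2 0
  have efb : ∀ σ, |ef θ q0 q1 q2 0 σ| ≤ E := fun σ => by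
    rw [abs_of_pos (ef_pos θ q0 q1 q2 0 σ)]
    exact ef_le hθ h0 h1 h2 (by norm_num) σ
  have efpos : ∀ σ, 0 ≤ ef θ q0 q1 q2 0 σ := fun σ => (ef_pos θ q0 q1 q2 0 σ).le
  have iA : Integrable (fun σ => q2 σ * ef θ q0 q1 q2 0 σ) μ := by
    refine integrable_of_bdd μ (m2.mul efm).aestronglyMeasurable (M := Q * E) fun σ => ?_
    rw [abs_mul]
    exact mul_le_mul (by rw [abs_of_nonneg (h2 σ).1]; exact (h2 σ).2) (efb σ)
      (abs_nonneg _) hQ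
  have iB : Integrable (fun σ => q1 σ * ef θ q0 q1 q2 0 σ) μ := by
    refine integrable_of_bdd μ (m1.mul efm).aestronglyMeasurable (M := 2 * Q * E) fun σ => ?_
    rw [abs_mul]
    exact mul_le_mul (h1 σ) (efb σ) (abs_nonneg _) (by linarith)
  have iD : Integrable (fun σ => q1 σ ^ 2 * ef θ q0 q1 q2 0 σ) μ := by
    refine integrable_of_bdd μ ((m1.pow 2).mul efm).aestronglyMeasurable
      (M := (2 * Q) ^ 2 * E) fun σ => ?_
    rw [abs_mul]
    refine mul_le_mul ?_ (efb σ) (abs_nonneg _) (by positivity)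
    rw [abs_pow]
    have := h1 σ
    nlinarith [abs_nonneg (q1 σ)]
  have e1 : (∫ σ, (θ * (2 * q2 σ) * ef θ q0 q1 q2 0 σ
        + (θ * q1 σ) ^ 2 * ef θ q0 q1 q2 0 σ) ∂μ)
      = 2 * θ * (∫ σ, q2 σ * ef θ q0 q1 q2 0 σ ∂μ)
        + θ ^ 2 * (∫ σ, q1 σ ^ 2 * ef θ q0 q1 q2 0 σ ∂μ) := by
    have hpt : ∀ σ, θ * (2 * q2 σ) * ef θ q0 q1 q2 0 σ
        + (θ * q1 σ) ^ 2 * ef θ q0 q1 q2 0 σ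
        = (2 * θ) * (q2 σ * ef θ q0 q1 q2 0 σ)
          + θ ^ 2 * (q1 σ ^ 2 * ef θ q0 q1 q2 0 σ) := fun σ => by ring
    simp only [hpt]
    rw [integral_add (iA.const_mul _) (iD.const_mul _), integral_const_mul,
      integral_const_mul]
  have e2 : (∫ σ, θ * q1 σ * ef θ q0 q1 q2 0 σ ∂μ)
      = θ * (∫ σ, q1 σ * ef θ q0 q1 q2 0 σ ∂μ) := by
    have hpt : ∀ σ, θ * q1 σ * ef θ q0 q1 q2 0 σ
        = θ * (q1 σ * ef θ q0 q1 q2 0 σ) := fun σ => by ring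
    simp only [hpt]
    rw [integral_const_mul]
  have e3 : (∫ σ, (ef θ q0 q1 q2 0 σ / ∫ τ, ef θ q0 q1 q2 0 τ ∂μ) * q2 σ ∂μ)
      = (∫ τ, ef θ q0 q1 q2 0 τ ∂μ)⁻¹ * (∫ σ, q2 σ * ef θ q0 q1 q2 0 σ ∂μ) := by
    have hpt : ∀ σ, (ef θ q0 q1 q2 0 σ / ∫ τ, ef θ q0 q1 q2 0 τ ∂μ) * q2 σ
        = (∫ τ, ef θ q0 q1 q2 0 τ ∂μ)⁻¹ * (q2 σ * ef θ q0 q1 q2 0 σ) := fun σ => by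
      ring
    simp only [hpt]
    rw [integral_const_mul]
  have e4 : (∫ σ, (ef θ q0 q1 q2 0 σ / ∫ τ, ef θ q0 q1 q2 0 τ ∂μ) * (q1 σ / 2) ^ 2 ∂μ)
      = ((∫ τ, ef θ q0 q1 q2 0 τ ∂μ)⁻¹ * (4:ℝ)⁻¹)
        * (∫ σ, q1 σ ^ 2 * ef θ q0 q1 q2 0 σ ∂μ) := by
    have hpt : ∀ σ, (ef θ q0 q1 q2 0 σ / ∫ τ, ef θ q0 q1 q2 0 τ ∂μ) * (q1 σ / 2) ^ 2
        = ((∫ τ, ef θ q0 q1 q2 0 τ ∂μ)⁻¹ * (4:ℝ)⁻¹)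
          * (q1 σ ^ 2 * ef θ q0 q1 q2 0 σ) := fun σ => by ring
    simp only [hpt]
    rw [integral_const_mul]
  have e5 : (∫ σ, (ef θ q0 q1 q2 0 σ / ∫ τ, ef θ q0 q1 q2 0 τ ∂μ) * (q1 σ / 2) ∂μ)
      = ((∫ τ, ef θ q0 q1 q2 0 τ ∂μ)⁻¹ * (2:ℝ)⁻¹)
        * (∫ σ, q1 σ * ef θ q0 q1 q2 0 σ ∂μ) := by
    have hpt : ∀ σ, (ef θ q0 q1 q2 0 σ / ∫ τ, ef θ q0 q1 q2 0 τ ∂μ) * (q1 σ / 2)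
        = ((∫ τ, ef θ q0 q1 q2 0 τ ∂μ)⁻¹ * (2:ℝ)⁻¹)
          * (q1 σ * ef θ q0 q1 q2 0 σ) := fun σ => by ring
    simp only [hpt]
    rw [integral_const_mul]
  rw [e1, e2, e3, e4, e5]
  have hcne : (∫ τ, ef θ q0 q1 q2 0 τ ∂μ) ≠ 0 := hc.ne'
  field_simp
  ring

end EntropicAux

/-- Second derivative of the entropic risk of a quadratic tracking cost:
the map `t ↦ R_θ(‖C(y + tδ - g)‖²)` is twice differentiable at `t = 0`,
and its second derivative is the tilted expectation of `⟪C*Cδ, δ⟫` plus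
`2θ` times the tilted variance of `⟪C*C(y-g), δ⟫` (times factors 2 and 4θ). -/
theorem entropic_risk_tracking_second_derivative
    {H : Type*} [NormedAddCommGroup H] [InnerProductSpace ℝ H]
    [CompleteSpace H] [SecondCountableTopology H]
    (C : H →L[ℝ] H)
    {Ω : Type*} [MeasurableSpace Ω] (μ : Measure Ω) [IsProbabilityMeasure μ]
    (θ : ℝ) (hθ : 0 < θ) (g : H) (y δ : Ω → H)
    (hy : StronglyMeasurable y) (hδ : StronglyMeasurable δ)
    (My : ℝ) (hMy : ∀ σ, ‖y σ‖ ≤ My) (Mδ : ℝ) (hMδ : ∀ σ, ‖δ σ‖ ≤ Mδ) :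
    DifferentiableAt ℝ
      (fun t : ℝ =>
        (1 / θ) * Real.log (∫ σ, Real.exp (θ * ‖C (y σ + t • δ σ - g)‖ ^ 2) ∂μ)) 0 ∧
    HasDerivAt
      (deriv (fun t : ℝ =>
        (1 / θ) * Real.log (∫ σ, Real.exp (θ * ‖C (y σ + t • δ σ - g)‖ ^ 2) ∂μ)))
      (2 * (∫ σ, (Real.exp (θ * ‖C (y σ - g)‖ ^ 2) /
              ∫ τ, Real.exp (θ * ‖C (y τ - g)‖ ^ 2) ∂μ) *
              ⟪(ContinuousLinearMap.adjoint C) (C (δ σ)), δ σ⟫ ∂μ)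
        + 4 * θ *
          ((∫ σ, (Real.exp (θ * ‖C (y σ - g)‖ ^ 2) /
                ∫ τ, Real.exp (θ * ‖C (y τ - g)‖ ^ 2) ∂μ) *
                ⟪(ContinuousLinearMap.adjoint C) (C (y σ - g)), δ σ⟫ ^ 2 ∂μ)
            - (∫ σ, (Real.exp (θ * ‖C (y σ - g)‖ ^ 2) /
                ∫ τ, Real.exp (θ * ‖C (y τ - g)‖ ^ 2) ∂μ) *
                ⟪(ContinuousLinearMap.adjoint C) (C (y σ - g)), δ σ⟫ ∂μ) ^ 2))
      0 := by
  have hne : Nonempty Ω := by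
    by_contra h
    rw [not_nonempty_iff] at h
    have h1 : (μ Set.univ) = 1 := measure_univ
    rw [Set.univ_eq_empty_iff.mpr h] at h1
    simp at h1
  obtain ⟨σ₀⟩ := hne
  -- bounds
  set Mx : ℝ := ‖C‖ * (My + ‖g‖) + ‖C‖ * Mδ with hMx_def
  have hMy0 : 0 ≤ My := le_trans (norm_nonneg _) (hMy σ₀)
  have hMδ0 : 0 ≤ Mδ := le_trans (norm_nonneg _) (hMδ σ₀)
  have hMa0 : 0 ≤ ‖C‖ * (My + ‖g‖) := mul_nonneg (norm_nonneg _) (by positivity)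
  have hMb0 : 0 ≤ ‖C‖ * Mδ := mul_nonneg (norm_nonneg _) hMδ0
  have hMx0 : 0 ≤ Mx := by rw [hMx_def]; linarith
  have hay_b : ∀ σ, ‖C (y σ - g)‖ ≤ Mx := by
    intro σ
    calc ‖C (y σ - g)‖ ≤ ‖C‖ * ‖y σ - g‖ := C.le_opNorm _
      _ ≤ ‖C‖ * (My + ‖g‖) := by
          refine mul_le_mul_of_nonneg_left ?_ (norm_nonneg C)
          exact le_trans (norm_sub_le _ _) (add_le_add (hMy σ) le_rfl)
      _ ≤ Mx := by rw [hMx_def]; linarith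
  have hab_b : ∀ σ, ‖C (δ σ)‖ ≤ Mx := by
    intro σ
    calc ‖C (δ σ)‖ ≤ ‖C‖ * ‖δ σ‖ := C.le_opNorm _
      _ ≤ ‖C‖ * Mδ := mul_le_mul_of_nonneg_left (hMδ σ) (norm_nonneg C)
      _ ≤ Mx := by rw [hMx_def]; linarith
  -- measurability
  have hay : StronglyMeasurable (fun σ => C (y σ - g)) :=
    C.continuous.comp_stronglyMeasurable (hy.sub stronglyMeasurable_const)
  have hab : StronglyMeasurable (fun σ => C (δ σ)) :=
    C.continuous.comp_stronglyMeasurable hδ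
  have m0 : StronglyMeasurable (fun σ => ‖C (y σ - g)‖ ^ 2) :=
    (continuous_pow 2).comp_stronglyMeasurable hay.norm
  have m1 : StronglyMeasurable (fun σ => 2 * ⟪C (y σ - g), C (δ σ)⟫) :=
    (hay.inner hab).const_mul 2
  have m2 : StronglyMeasurable (fun σ => ‖C (δ σ)‖ ^ 2) :=
    (continuous_pow 2).comp_stronglyMeasurable hab.norm
  -- coefficient bounds
  have h0b : ∀ σ, 0 ≤ ‖C (y σ - g)‖ ^ 2 ∧ ‖C (y σ - g)‖ ^ 2 ≤ Mx ^ 2 := fun σ =>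
    ⟨by positivity, pow_le_pow_left₀ (norm_nonneg _) (hay_b σ) 2⟩
  have h1b : ∀ σ, |2 * ⟪C (y σ - g), C (δ σ)⟫| ≤ 2 * Mx ^ 2 := by
    intro σ
    rw [abs_mul, abs_two]
    have hi := abs_real_inner_le_norm (C (y σ - g)) (C (δ σ))
    have := hay_b σ
    have := hab_b σ
    nlinarith [norm_nonneg (C (y σ - g)), norm_nonneg (C (δ σ))]
  have h2b : ∀ σ, 0 ≤ ‖C (δ σ)‖ ^ 2 ∧ ‖C (δ σ)‖ ^ 2 ≤ Mx ^ 2 := fun σ =>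
    ⟨by positivity, pow_le_pow_left₀ (norm_nonneg _) (hab_b σ) 2⟩
  obtain ⟨hd, hD⟩ := EntropicAux.main μ hθ m0 m1 m2 h0b h1b h2b
  -- representation of the goal function
  have hrep : ∀ (t : ℝ) (σ : Ω), θ * ‖C (y σ + t • δ σ - g)‖ ^ 2
      = θ * (‖C (y σ - g)‖ ^ 2 + 2 * ⟪C (y σ - g), C (δ σ)⟫ * t + ‖C (δ σ)‖ ^ 2 * t ^ 2) := by
    intro t σ
    have hsplit : C (y σ + t • δ σ - g) = C (y σ - g) + t • C (δ σ) := by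
      rw [show y σ + t • δ σ - g = (y σ - g) + t • δ σ from by abel, map_add, _root_.map_smul]
    rw [hsplit, norm_add_sq_real, real_inner_smul_right, norm_smul, mul_pow,
      Real.norm_eq_abs, sq_abs]
    ring
  have hfuneq : (fun t : ℝ =>
        (1 / θ) * Real.log (∫ σ, Real.exp (θ * ‖C (y σ + t • δ σ - g)‖ ^ 2) ∂μ))
      = fun t : ℝ => (1 / θ) * Real.log (∫ σ, EntropicAux.ef θ
          (fun σ => ‖C (y σ - g)‖ ^ 2) (fun σ => 2 * ⟪C (y σ - g), C (δ σ)⟫)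
          (fun σ => ‖C (δ σ)‖ ^ 2) t σ ∂μ) := by
    funext t
    simp only [EntropicAux.ef, hrep]
  have hexp0 : ∀ σ : Ω, Real.exp (θ * ‖C (y σ - g)‖ ^ 2)
      = EntropicAux.ef θ (fun σ => ‖C (y σ - g)‖ ^ 2)
          (fun σ => 2 * ⟪C (y σ - g), C (δ σ)⟫) (fun σ => ‖C (δ σ)‖ ^ 2) 0 σ := by
    intro σ
    simp only [EntropicAux.ef]
    norm_num
  have hinn1 : ∀ σ : Ω, ⟪(ContinuousLinearMap.adjoint C) (C (δ σ)), δ σ⟫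
      = ‖C (δ σ)‖ ^ 2 := fun σ => by
    rw [ContinuousLinearMap.adjoint_inner_left, real_inner_self_eq_norm_sq]
  have hinn2 : ∀ σ : Ω, ⟪(ContinuousLinearMap.adjoint C) (C (y σ - g)), δ σ⟫
      = 2 * ⟪C (y σ - g), C (δ σ)⟫ / 2 := fun σ => by
    rw [ContinuousLinearMap.adjoint_inner_left]
    ring
  constructor
  · rw [hfuneq]
    exact hd
  · rw [hfuneq]
    simp only [hexp0, hinn1, hinn2]
    exact hD
end

section
/- Let H be a real separable Hilbert space, let C : H → H be a continuous linear map for which there exists c > 0 with ‖Cx‖_H ≥ c·‖x‖_H for all x ∈ H, let (Ω, F, μ) be a probability space, let θ > 0, let g ∈ H, and let y, δ : Ω → H be bounded strongly measurable functions. Suppose a ≤ ‖C(y(σ) − g)‖_H² ≤ b for μ-almost every σ. Define ω(σ) := exp(θ·‖C(y(σ) − g)‖_H²) / ∫_Ω exp(θ·‖C(y(τ) − g)‖_H²) dμ(τ) and 𝒞(σ) := C*C(y(σ) − g). Then the quadratic form is coercive: 2·∫_Ω ω(σ)·‖C δ(σ)‖_H² dμ(σ) + 4θ·( ∫_Ω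 ω(σ)·⟨𝒞(σ), δ(σ)⟩_H² dμ(σ) − ( ∫_Ω ω(σ)·⟨𝒞(σ), δ(σ)⟩_H dμ(σ) )² ) ≥ 2·c²·exp(−θ·(b − a))·∫_Ω ‖δ(σ)‖_H² dμ(σ). -/
open MeasureTheory
open scoped RealInnerProductSpace

private lemma integrable_of_bdd {Ω : Type*} [MeasurableSpace Ω] {μ : Measure Ω}
    [IsFiniteMeasure μ] {f : Ω → ℝ} (hf : AEStronglyMeasurable f μ) {M : ℝ}
    (h : ∀ σ, |f σ| ≤ M) : Integrable f μ :=
  (integrable_const M).mono' hf (Filter.Eventually.of_forall fun σ => by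
    simpa using h σ)

/-- Coercivity of the second-order quadratic form of the entropic risk objective
when the observation operator `C` is bounded below. -/
theorem entropic_risk_second_order_coercive
    {H : Type*} [NormedAddCommGroup H] [InnerProductSpace ℝ H]
    [CompleteSpace H] [SecondCountableTopology H]
    (C : H →L[ℝ] H) (c : ℝ) (hc : 0 < c) (hC : ∀ x : H, c * ‖x‖ ≤ ‖C x‖)
    {Ω : Type*} [MeasurableSpace Ω] (μ : Measure Ω) [IsProbabilityMeasure μ]
    (θ : ℝ) (hθ : 0 < θ) (g : H) (y δ : Ω → H)
    (hy : StronglyMeasurable y) (hδ : StronglyMeasurable δ)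
    (My : ℝ) (hMy : ∀ σ, ‖y σ‖ ≤ My) (Mδ : ℝ) (hMδ : ∀ σ, ‖δ σ‖ ≤ Mδ)
    (a b : ℝ)
    (hab : ∀ᵐ σ ∂μ, a ≤ ‖C (y σ - g)‖ ^ 2 ∧ ‖C (y σ - g)‖ ^ 2 ≤ b) :
    2 * c ^ 2 * Real.exp (-θ * (b - a)) * (∫ σ, ‖δ σ‖ ^ 2 ∂μ) ≤
      2 * (∫ σ, (Real.exp (θ * ‖C (y σ - g)‖ ^ 2) /
            ∫ τ, Real.exp (θ * ‖C (y τ - g)‖ ^ 2) ∂μ) * ‖C (δ σ)‖ ^ 2 ∂μ)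
        + 4 * θ *
          ((∫ σ, (Real.exp (θ * ‖C (y σ - g)‖ ^ 2) /
                ∫ τ, Real.exp (θ * ‖C (y τ - g)‖ ^ 2) ∂μ) *
                ⟪(ContinuousLinearMap.adjoint C) (C (y σ - g)), δ σ⟫ ^ 2 ∂μ)
            - (∫ σ, (Real.exp (θ * ‖C (y σ - g)‖ ^ 2) /
                ∫ τ, Real.exp (θ * ‖C (y τ - g)‖ ^ 2) ∂μ) *
                ⟪(ContinuousLinearMap.adjoint C) (C (y σ - g)), δ σ⟫ ∂μ) ^ 2) := by
  haveI : (ae μ).NeBot := ae_neBot.2 (IsProbabilityMeasure.ne_zero μ)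
  obtain ⟨σ₀, -⟩ := hab.exists
  have hMy0 : 0 ≤ My := le_trans (norm_nonneg _) (hMy σ₀)
  have hMδ0 : 0 ≤ Mδ := le_trans (norm_nonneg _) (hMδ σ₀)
  -- notation
  set v : Ω → ℝ := fun σ => ‖C (y σ - g)‖ ^ 2 with hvdef
  set Z : ℝ := ∫ τ, Real.exp (θ * v τ) ∂μ with hZdef
  set f : Ω → ℝ := fun σ => ⟪(ContinuousLinearMap.adjoint C) (C (y σ - g)), δ σ⟫ with hfdef
  set ω : Ω → ℝ := fun σ => Real.exp (θ * v σ) / Z with hωdef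
  -- measurability
  have hyg : StronglyMeasurable (fun σ => y σ - g) := hy.sub stronglyMeasurable_const
  have hCyg : StronglyMeasurable (fun σ => C (y σ - g)) :=
    C.continuous.comp_stronglyMeasurable hyg
  have hvm : StronglyMeasurable v := by
    have : StronglyMeasurable fun σ => ‖C (y σ - g)‖ * ‖C (y σ - g)‖ := hCyg.norm.mul hCyg.norm
    simpa [hvdef, pow_two] using this
  have hem : StronglyMeasurable (fun σ => Real.exp (θ * v σ)) :=
    Real.continuous_exp.comp_stronglyMeasurable (hvm.const_mul θ)
  have hωm : StronglyMeasurable ω := by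
    simpa [hωdef, div_eq_mul_inv] using hem.mul_const Z⁻¹
  have hfm : StronglyMeasurable f :=
    continuous_inner.comp_stronglyMeasurable
      (((ContinuousLinearMap.adjoint C).continuous.comp_stronglyMeasurable hCyg).prodMk hδ)
  have hCδm : StronglyMeasurable (fun σ => ‖C (δ σ)‖ ^ 2) := by
    have h1 : StronglyMeasurable (fun σ => C (δ σ)) := C.continuous.comp_stronglyMeasurable hδ
    simpa [pow_two] using (show StronglyMeasurable fun σ => ‖C (δ σ)‖ * ‖C (δ σ)‖ from h1.norm.mul h1.norm)
  -- bounds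
  set K : ℝ := ‖C‖ * (My + ‖g‖) with hKdef
  have hK0 : 0 ≤ K := mul_nonneg (norm_nonneg _) (by positivity)
  have hnormb : ∀ σ, ‖C (y σ - g)‖ ≤ K := fun σ => by
    calc ‖C (y σ - g)‖ ≤ ‖C‖ * ‖y σ - g‖ := C.le_opNorm _
    _ ≤ ‖C‖ * (My + ‖g‖) := by
        refine mul_le_mul_of_nonneg_left ?_ (norm_nonneg _)
        exact le_trans (norm_sub_le _ _) (add_le_add_left (hMy σ) _)
  have hv0 : ∀ σ, 0 ≤ v σ := fun σ => sq_nonneg _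
  have hvK : ∀ σ, v σ ≤ K ^ 2 := fun σ => pow_le_pow_left₀ (norm_nonneg _) (hnormb σ) 2
  have heb : ∀ σ, Real.exp (θ * v σ) ≤ Real.exp (θ * K ^ 2) := fun σ =>
    Real.exp_le_exp.2 (mul_le_mul_of_nonneg_left (hvK σ) hθ.le)
  have he1 : ∀ σ, (1 : ℝ) ≤ Real.exp (θ * v σ) := fun σ =>
    Real.one_le_exp (mul_nonneg hθ.le (hv0 σ))
  have hie : Integrable (fun σ => Real.exp (θ * v σ)) μ :=
    integrable_of_bdd hem.aestronglyMeasurable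
      (M := Real.exp (θ * K ^ 2)) (fun σ => by
        rw [abs_of_pos (Real.exp_pos _)]; exact heb σ)
  have hZ1 : (1 : ℝ) ≤ Z := by
    have := integral_mono (integrable_const (1 : ℝ)) hie he1
    simpa using this
  have hZpos : 0 < Z := lt_of_lt_of_le one_pos hZ1
  have hZb : Z ≤ Real.exp (θ * b) := by
    have h1 : ∀ᵐ σ ∂μ, Real.exp (θ * v σ) ≤ Real.exp (θ * b) := by
      filter_upwards [hab] with σ hσ
      exact Real.exp_le_exp.2 (mul_le_mul_of_nonneg_left hσ.2 hθ.le)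
    have := integral_mono_ae hie (integrable_const _) h1
    simpa using this
  have hω0 : ∀ σ, 0 ≤ ω σ := fun σ => div_nonneg (Real.exp_pos _).le hZpos.le
  have hωb : ∀ σ, ω σ ≤ Real.exp (θ * K ^ 2) := fun σ =>
    le_trans (div_le_self (Real.exp_pos _).le hZ1) (heb σ)
  -- ω integrates to 1
  have hωint : ∫ σ, ω σ ∂μ = 1 := by
    rw [hωdef]
    simp only [div_eq_mul_inv]
    rw [integral_mul_const, ← hZdef, mul_inv_cancel₀ hZpos.ne']
  -- a.e. lower bound on ω
  have hωlow : ∀ᵐ σ ∂μ, Real.exp (-θ * (b - a)) ≤ ω σ := by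
    filter_upwards [hab] with σ hσ
    have h1 : Real.exp (θ * a) ≤ Real.exp (θ * v σ) :=
      Real.exp_le_exp.2 (mul_le_mul_of_nonneg_left hσ.1 hθ.le)
    have h2 : Real.exp (θ * a) / Real.exp (θ * b) ≤ Real.exp (θ * v σ) / Z :=
      div_le_div₀ (Real.exp_pos _).le h1 hZpos hZb
    calc Real.exp (-θ * (b - a)) = Real.exp (θ * a) / Real.exp (θ * b) := by
          rw [← Real.exp_sub]; ring_nf
    _ ≤ ω σ := h2
  -- bounds on f and ‖Cδ‖²
  have hfb : ∀ σ, |f σ| ≤ ‖C‖ * K * Mδ := fun σ => by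
    calc |f σ| ≤ ‖(ContinuousLinearMap.adjoint C) (C (y σ - g))‖ * ‖δ σ‖ :=
          abs_real_inner_le_norm _ _
    _ ≤ ‖C‖ * K * Mδ := by
        refine mul_le_mul ?_ (hMδ σ) (norm_nonneg _) (by positivity)
        calc ‖(ContinuousLinearMap.adjoint C) (C (y σ - g))‖
            ≤ ‖(ContinuousLinearMap.adjoint C)‖ * ‖C (y σ - g)‖ :=
              (ContinuousLinearMap.adjoint C).le_opNorm _
        _ ≤ ‖C‖ * K := by
            rw [LinearIsometryEquiv.norm_map (ContinuousLinearMap.adjoint) C]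
            exact mul_le_mul_of_nonneg_left (hnormb σ) (norm_nonneg _)
  have hCδb : ∀ σ, ‖C (δ σ)‖ ^ 2 ≤ (‖C‖ * Mδ) ^ 2 := fun σ => by
    refine pow_le_pow_left₀ (norm_nonneg _) ?_ 2
    calc ‖C (δ σ)‖ ≤ ‖C‖ * ‖δ σ‖ := C.le_opNorm _
    _ ≤ ‖C‖ * Mδ := mul_le_mul_of_nonneg_left (hMδ σ) (norm_nonneg _)
  -- integrability of all integrands
  set Mω : ℝ := Real.exp (θ * K ^ 2) with hMωdef
  have hMω0 : 0 ≤ Mω := (Real.exp_pos _).le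
  set Mf : ℝ := ‖C‖ * K * Mδ with hMfdef
  have hMf0 : 0 ≤ Mf := le_trans (abs_nonneg _) (hfb σ₀)
  have hiδ : Integrable (fun σ => ‖δ σ‖ ^ 2) μ := by
    refine integrable_of_bdd ?_ (M := Mδ ^ 2) (fun σ => by
      rw [abs_of_nonneg (sq_nonneg _)]
      exact pow_le_pow_left₀ (norm_nonneg _) (hMδ σ) 2)
    exact (by simpa [pow_two] using (show StronglyMeasurable fun σ => ‖δ σ‖ * ‖δ σ‖ from hδ.norm.mul hδ.norm) :
      StronglyMeasurable (fun σ => ‖δ σ‖ ^ 2)).aestronglyMeasurable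
  have hiωCδ : Integrable (fun σ => ω σ * ‖C (δ σ)‖ ^ 2) μ := by
    refine integrable_of_bdd (hωm.mul hCδm).aestronglyMeasurable
      (M := Mω * (‖C‖ * Mδ) ^ 2) (fun σ => ?_)
    rw [abs_of_nonneg (mul_nonneg (hω0 σ) (sq_nonneg _))]
    exact mul_le_mul (hωb σ) (hCδb σ) (sq_nonneg _) hMω0
  have hiω : Integrable ω μ :=
    integrable_of_bdd hωm.aestronglyMeasurable (M := Mω) (fun σ => by
      rw [abs_of_nonneg (hω0 σ)]; exact hωb σ)
  have hiωf : Integrable (fun σ => ω σ * f σ) μ := by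
    refine integrable_of_bdd (hωm.mul hfm).aestronglyMeasurable (M := Mω * Mf) (fun σ => ?_)
    rw [abs_mul, abs_of_nonneg (hω0 σ)]
    exact mul_le_mul (hωb σ) (hfb σ) (abs_nonneg _) hMω0
  have hiωf2 : Integrable (fun σ => ω σ * f σ ^ 2) μ := by
    refine integrable_of_bdd (hωm.mul (by simpa [pow_two] using (show StronglyMeasurable fun σ => f σ * f σ from hfm.mul hfm) :
      StronglyMeasurable (fun σ => f σ ^ 2))).aestronglyMeasurable
      (M := Mω * Mf ^ 2) (fun σ => ?_)
    rw [abs_of_nonneg (mul_nonneg (hω0 σ) (sq_nonneg _))]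
    refine mul_le_mul (hωb σ) ?_ (sq_nonneg _) hMω0
    calc f σ ^ 2 = |f σ| ^ 2 := (sq_abs _).symm
    _ ≤ Mf ^ 2 := pow_le_pow_left₀ (abs_nonneg _) (hfb σ) 2
  -- first term: coercivity from the lower bound on ω and on C
  have hA : c ^ 2 * Real.exp (-θ * (b - a)) * (∫ σ, ‖δ σ‖ ^ 2 ∂μ)
      ≤ ∫ σ, ω σ * ‖C (δ σ)‖ ^ 2 ∂μ := by
    have hmono : ∀ᵐ σ ∂μ, c ^ 2 * Real.exp (-θ * (b - a)) * ‖δ σ‖ ^ 2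
        ≤ ω σ * ‖C (δ σ)‖ ^ 2 := by
      filter_upwards [hωlow] with σ hσ
      have h1 : c ^ 2 * ‖δ σ‖ ^ 2 ≤ ‖C (δ σ)‖ ^ 2 := by
        have := pow_le_pow_left₀ (mul_nonneg hc.le (norm_nonneg _)) (hC (δ σ)) 2
        calc c ^ 2 * ‖δ σ‖ ^ 2 = (c * ‖δ σ‖) ^ 2 := by ring
        _ ≤ ‖C (δ σ)‖ ^ 2 := this
      calc c ^ 2 * Real.exp (-θ * (b - a)) * ‖δ σ‖ ^ 2
          = Real.exp (-θ * (b - a)) * (c ^ 2 * ‖δ σ‖ ^ 2) := by ring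
      _ ≤ ω σ * ‖C (δ σ)‖ ^ 2 :=
          mul_le_mul hσ h1 (by positivity) (hω0 σ)
    have := integral_mono_ae ((hiδ.const_mul _)) hiωCδ hmono
    calc c ^ 2 * Real.exp (-θ * (b - a)) * (∫ σ, ‖δ σ‖ ^ 2 ∂μ)
        = ∫ σ, c ^ 2 * Real.exp (-θ * (b - a)) * ‖δ σ‖ ^ 2 ∂μ := by
          rw [integral_const_mul]
    _ ≤ _ := this
  -- variance nonnegativity
  set m : ℝ := ∫ σ, ω σ * f σ ∂μ with hmdef
  have hvar : m ^ 2 ≤ ∫ σ, ω σ * f σ ^ 2 ∂μ := by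
    have key : 0 ≤ ∫ σ, ω σ * (f σ - m) ^ 2 ∂μ :=
      integral_nonneg fun σ => mul_nonneg (hω0 σ) (sq_nonneg _)
    have hexp : (fun σ => ω σ * (f σ - m) ^ 2)
        = fun σ => ω σ * f σ ^ 2 - (2 * m) * (ω σ * f σ) + m ^ 2 * ω σ := by
      funext σ; ring
    have hI1 : Integrable (fun σ => ω σ * f σ ^ 2 - 2 * m * (ω σ * f σ)) μ :=
      hiωf2.sub (hiωf.const_mul _)
    rw [hexp, integral_add hI1 (hiω.const_mul _),
      integral_sub hiωf2 (hiωf.const_mul _), integral_const_mul, integral_const_mul,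
      hωint] at key
    nlinarith [key]
  -- assemble
  have h4 : 0 ≤ 4 * θ * ((∫ σ, ω σ * f σ ^ 2 ∂μ) - m ^ 2) :=
    mul_nonneg (by positivity) (sub_nonneg.2 hvar)
  have goal' : 2 * c ^ 2 * Real.exp (-θ * (b - a)) * (∫ σ, ‖δ σ‖ ^ 2 ∂μ)
      ≤ 2 * (∫ σ, ω σ * ‖C (δ σ)‖ ^ 2 ∂μ)
        + 4 * θ * ((∫ σ, ω σ * f σ ^ 2 ∂μ) - m ^ 2) := by
    nlinarith [hA]
  simpa [hωdef, hfdef, hvdef, hZdef, hmdef, sub_eq_add_neg] using goal'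
end
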